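/- For a 1 × L rectangular laptop (L ≥ 1) and a rectangular table with both sides of length at least √2, every stable placement (center of laptop on the table) has footprint area at least 1/4, and the area equals 1/4 only if the laptop center coincides with a corner of the table. -/
import Mathlib


open Real MeasureTheory

/-- The rectangle of width 1 and length `L`, centered at `c` and rotated by `θ`. -/
def rect (c : ℝ × ℝ) (θ L : ℝ) : Set (ℝ × ℝ) :=
  {p | |Real.cos θ * (p.1 - c.1) + Real.sin θ * (p.2 - c.2)| ≤ 1 / 2 ∧
       |(-Real.sin θ) * (p.1 - c.1) + Real.cos θ * (p.2 - c.2)| ≤ L / 2}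

open ENNReal

lemma measurableSet_rect (c : ℝ × ℝ) (θ L : ℝ) : MeasurableSet (rect c θ L) := by
  have : rect c θ L = {p : ℝ × ℝ | |Real.cos θ * (p.1 - c.1) + Real.sin θ * (p.2 - c.2)| ≤ 1/2}
      ∩ {p : ℝ × ℝ | |(-Real.sin θ) * (p.1 - c.1) + Real.cos θ * (p.2 - c.2)| ≤ L/2} := rfl
  rw [this]
  apply MeasurableSet.inter <;>
  · apply measurableSet_le _ measurable_const
    fun_prop

lemma volume_rect_one (p : ℝ × ℝ) (θ : ℝ) : volume (rect p θ 1) = 1 := by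
  set c := Real.cos θ with hc
  set s := Real.sin θ with hs
  set M : Matrix (Fin 2) (Fin 2) ℝ := !![c, s; -s, c] with hM
  set f := Matrix.toLin (Module.Basis.finTwoProd ℝ) (Module.Basis.finTwoProd ℝ) M with hf
  have hdet : LinearMap.det f = 1 := by
    rw [hf, LinearMap.det_toLin, hM, Matrix.det_fin_two_of]
    nlinarith [Real.sin_sq_add_cos_sq θ]
  have hK : MeasurableSet (Set.Icc (-(1:ℝ)/2) (1/2) ×ˢ Set.Icc (-(1:ℝ)/2) (1/2)) :=
    (measurableSet_Icc).prod measurableSet_Icc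
  have hset : rect p θ 1 = (fun q : ℝ × ℝ => q + (-p)) ⁻¹'
      (f ⁻¹' (Set.Icc (-(1:ℝ)/2) (1/2) ×ˢ Set.Icc (-(1:ℝ)/2) (1/2))) := by
    ext q
    simp only [rect, Set.mem_setOf_eq, Set.mem_preimage, hf, hM,
      Matrix.toLin_finTwoProd_apply, Set.mem_prod, Set.mem_Icc, abs_le,
      Prod.fst_add, Prod.snd_add, Prod.fst_neg, Prod.snd_neg]
    constructor
    · rintro ⟨⟨h1, h2⟩, h3, h4⟩
      refine ⟨⟨by linarith [h1], by linarith [h2]⟩, by linarith [h3], by linarith [h4]⟩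
    · rintro ⟨⟨h1, h2⟩, h3, h4⟩
      refine ⟨⟨by linarith [h1], by linarith [h2]⟩, by linarith [h3], by linarith [h4]⟩
  have htr : MeasurePreserving (fun q : ℝ × ℝ => q + (-p)) volume volume :=
    measurePreserving_add_right volume (-p)
  rw [hset, htr.measure_preimage (((hK.preimage f.continuous_of_finiteDimensional.measurable)).nullMeasurableSet)]
  rw [Measure.addHaar_preimage_linearMap volume (by rw [hdet]; norm_num) _]
  rw [hdet]
  rw [Measure.volume_eq_prod, Measure.prod_prod, Real.volume_Icc]
  norm_num

def quadSet (p : ℝ × ℝ) (e₁ e₂ : ℝ) : Set (ℝ × ℝ) :=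
  {q | 0 ≤ e₁ * (q.1 - p.1) ∧ 0 ≤ e₂ * (q.2 - p.2)}

lemma measurableSet_quadSet (p : ℝ × ℝ) (e₁ e₂ : ℝ) : MeasurableSet (quadSet p e₁ e₂) := by
  have : quadSet p e₁ e₂ = {q : ℝ × ℝ | 0 ≤ e₁ * (q.1 - p.1)} ∩ {q | 0 ≤ e₂ * (q.2 - p.2)} := rfl
  rw [this]
  apply MeasurableSet.inter <;> · apply measurableSet_le measurable_const; fun_prop

lemma quad_vol (p : ℝ × ℝ) (θ : ℝ) (e₁ e₂ : ℝ) (h₁ : e₁ = 1 ∨ e₁ = -1) (h₂ : e₂ = 1 ∨ e₂ = -1) :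
    1/4 ≤ volume (rect p θ 1 ∩ quadSet p e₁ e₂) := by
  set r : ℝ × ℝ → ℝ × ℝ := (fun w => ((p.1 + p.2), (p.2 - p.1)) + w) ∘ (Prod.map Neg.neg id) ∘ Prod.swap
    with hr
  have hswap : MeasurePreserving (Prod.swap : ℝ × ℝ → ℝ × ℝ) volume volume := by
    rw [Measure.volume_eq_prod]; exact Measure.measurePreserving_swap
  have hneg : MeasurePreserving (Prod.map (Neg.neg : ℝ → ℝ) (id : ℝ → ℝ)) volume volume := by
    rw [Measure.volume_eq_prod]
    exact (Measure.measurePreserving_neg volume).prod (MeasurePreserving.id volume)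
  have hrmp : MeasurePreserving r volume volume :=
    (measurePreserving_add_left volume _).comp (hneg.comp hswap)
  have hrq : ∀ q : ℝ × ℝ, r q = (p.1 + p.2 + -q.2, p.2 - p.1 + q.1) := by
    intro q; rfl
  have key : ∀ a b : ℝ, r ⁻¹' (rect p θ 1 ∩ quadSet p a b) = rect p θ 1 ∩ quadSet p b (-a) := by
    intro a b
    ext q
    simp only [Set.mem_preimage, hrq, Set.mem_inter_iff, rect, quadSet, Set.mem_setOf_eq, abs_le]
    constructor
    · rintro ⟨⟨⟨h1, h2⟩, h3, h4⟩, h5, h6⟩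
      refine ⟨⟨⟨by nlinarith, by nlinarith⟩, by nlinarith, by nlinarith⟩, by nlinarith, by nlinarith⟩
    · rintro ⟨⟨⟨h1, h2⟩, h3, h4⟩, h5, h6⟩
      refine ⟨⟨⟨by nlinarith, by nlinarith⟩, by nlinarith, by nlinarith⟩, by nlinarith, by nlinarith⟩
  have meas : ∀ a b : ℝ, NullMeasurableSet (rect p θ 1 ∩ quadSet p a b) volume :=
    fun a b => ((measurableSet_rect p θ 1).inter (measurableSet_quadSet p a b)).nullMeasurableSet
  have veq : ∀ a b : ℝ, volume (rect p θ 1 ∩ quadSet p b (-a)) = volume (rect p θ 1 ∩ quadSet p a b) := by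
    intro a b
    rw [← key a b, hrmp.measure_preimage (meas a b)]
  have e11 : volume (rect p θ 1 ∩ quadSet p 1 (-1)) = volume (rect p θ 1 ∩ quadSet p 1 1) := by
    have := veq 1 1; norm_num at this ⊢; exact this
  have e12 : volume (rect p θ 1 ∩ quadSet p (-1) (-1)) = volume (rect p θ 1 ∩ quadSet p 1 (-1)) := veq 1 (-1)
  have e13 : volume (rect p θ 1 ∩ quadSet p (-1) 1 ) = volume (rect p θ 1 ∩ quadSet p (-1) (-1)) := by
    have := veq (-1) (-1); norm_num at this ⊢; exact this
  set w := volume (rect p θ 1 ∩ quadSet p 1 1) with hw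
  have cover : rect p θ 1 ⊆ (rect p θ 1 ∩ quadSet p 1 1) ∪ ((rect p θ 1 ∩ quadSet p 1 (-1)) ∪
      ((rect p θ 1 ∩ quadSet p (-1) 1) ∪ (rect p θ 1 ∩ quadSet p (-1) (-1)))) := by
    intro q hq
    rcases le_total 0 (q.1 - p.1) with hx | hx <;> rcases le_total 0 (q.2 - p.2) with hy | hy
    · exact Or.inl ⟨hq, by simp only [quadSet, Set.mem_setOf_eq]; constructor <;> nlinarith⟩
    · exact Or.inr (Or.inl ⟨hq, by simp only [quadSet, Set.mem_setOf_eq]; constructor <;> nlinarith⟩)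
    · exact Or.inr (Or.inr (Or.inl ⟨hq, by
        simp only [quadSet, Set.mem_setOf_eq]; constructor <;> nlinarith⟩))
    · exact Or.inr (Or.inr (Or.inr ⟨hq, by
        simp only [quadSet, Set.mem_setOf_eq]; constructor <;> nlinarith⟩))
  have hbound : (1 : ℝ≥0∞) ≤ w + (w + (w + w)) := by
    calc (1:ℝ≥0∞) = volume (rect p θ 1) := (volume_rect_one p θ).symm
    _ ≤ volume ((rect p θ 1 ∩ quadSet p 1 1) ∪ ((rect p θ 1 ∩ quadSet p 1 (-1)) ∪
      ((rect p θ 1 ∩ quadSet p (-1) 1) ∪ (rect p θ 1 ∩ quadSet p (-1) (-1))))) := measure_mono cover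
    _ ≤ volume (rect p θ 1 ∩ quadSet p 1 1) + (volume (rect p θ 1 ∩ quadSet p 1 (-1)) +
        (volume (rect p θ 1 ∩ quadSet p (-1) 1) + volume (rect p θ 1 ∩ quadSet p (-1) (-1)))) := by
        refine le_trans (measure_union_le _ _) (add_le_add le_rfl ?_)
        refine le_trans (measure_union_le _ _) (add_le_add le_rfl ?_)
        exact measure_union_le _ _
    _ = w + (w + (w + w)) := by rw [e13, e12, e11]
  have hw4 : (1 : ℝ≥0∞) ≤ 4 * w := by
    calc (1:ℝ≥0∞) ≤ w + (w + (w + w)) := hbound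
    _ = 4 * w := by ring
  have hquart : (1:ℝ≥0∞)/4 ≤ w := by
    have h4 : (4:ℝ≥0∞)⁻¹ * 1 ≤ 4⁻¹ * (4 * w) := by gcongr
    rw [← mul_assoc, ENNReal.inv_mul_cancel (by norm_num) (by norm_num), one_mul, mul_one] at h4
    simpa [one_div] using h4
  rcases h₁ with rfl | rfl <;> rcases h₂ with rfl | rfl
  · exact hquart
  · rw [e11]; exact hquart
  · rw [e13, e12, e11]; exact hquart
  · rw [e12, e11]; exact hquart

lemma vol_lineIco (e c l u : ℝ) (he : e = 1 ∨ e = -1) (hlu : l ≤ u) :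
    volume {x : ℝ | e * (x - c) ∈ Set.Ico l u} = ENNReal.ofReal (u - l) := by
  rcases he with rfl | rfl
  · have : {x : ℝ | (1:ℝ) * (x - c) ∈ Set.Ico l u} = Set.Ico (c + l) (c + u) := by
      ext x; simp [Set.mem_Ico]; constructor <;> rintro ⟨h1, h2⟩ <;> constructor <;> linarith
    rw [this, Real.volume_Ico]; ring_nf
  · have : {x : ℝ | (-1:ℝ) * (x - c) ∈ Set.Ico l u} = Set.Ioc (c - u) (c - l) := by
      ext x; simp [Set.mem_Ico, Set.mem_Ioc]; constructor <;> rintro ⟨h1, h2⟩ <;> constructor <;> linarith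
    rw [this, Real.volume_Ioc]; ring_nf

lemma vol_lineIcc (e c l u : ℝ) (he : e = 1 ∨ e = -1) (hlu : l ≤ u) :
    volume {x : ℝ | e * (x - c) ∈ Set.Icc l u} = ENNReal.ofReal (u - l) := by
  rcases he with rfl | rfl
  · have : {x : ℝ | (1:ℝ) * (x - c) ∈ Set.Icc l u} = Set.Icc (c + l) (c + u) := by
      ext x; simp [Set.mem_Icc]; constructor <;> rintro ⟨h1, h2⟩ <;> constructor <;> linarith
    rw [this, Real.volume_Icc]; ring_nf
  · have : {x : ℝ | (-1:ℝ) * (x - c) ∈ Set.Icc l u} = Set.Icc (c - u) (c - l) := by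
      ext x; simp [Set.mem_Icc]; constructor <;> rintro ⟨h1, h2⟩ <;> constructor <;> linarith
    rw [this, Real.volume_Icc]; ring_nf

lemma abs_cos_add_abs_sin_le (θ : ℝ) : |Real.cos θ| + |Real.sin θ| ≤ Real.sqrt 2 := by
  rw [show Real.sqrt 2 = Real.sqrt 2 from rfl]
  refine Real.le_sqrt_of_sq_le ?_
  nlinarith [Real.sin_sq_add_cos_sq θ, sq_nonneg (|Real.cos θ| - |Real.sin θ|),
    sq_abs (Real.cos θ), sq_abs (Real.sin θ)]

lemma rect_coord_bound (p : ℝ × ℝ) (θ : ℝ) (q : ℝ × ℝ) (hq : q ∈ rect p θ 1) :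
    |q.1 - p.1| ≤ Real.sqrt 2 / 2 ∧ |q.2 - p.2| ≤ Real.sqrt 2 / 2 := by
  obtain ⟨h1, h2⟩ := hq
  set c := Real.cos θ; set s := Real.sin θ
  set u := q.1 - p.1; set v := q.2 - p.2
  have hcs := abs_cos_add_abs_sin_le θ
  have hpy : s^2 + c^2 = 1 := Real.sin_sq_add_cos_sq θ
  have hu : u = c * (c*u + s*v) + (-s) * ((-s)*u + c*v) := by linear_combination (-u) * hpy
  have hv : v = s * (c*u + s*v) + c * ((-s)*u + c*v) := by linear_combination (-v) * hpy
  constructor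
  · calc |u| = |c * (c*u + s*v) + (-s) * ((-s)*u + c*v)| := by rw [← hu]
    _ ≤ |c| * |c*u + s*v| + |s| * |(-s)*u + c*v| := by
        refine le_trans (abs_add_le _ _) ?_
        rw [abs_mul, abs_mul, abs_neg]
    _ ≤ |c| * (1/2) + |s| * (1/2) := by
        gcongr <;> assumption
    _ ≤ Real.sqrt 2 / 2 := by linarith
  · calc |v| = |s * (c*u + s*v) + c * ((-s)*u + c*v)| := by rw [← hv]
    _ ≤ |s| * |c*u + s*v| + |c| * |(-s)*u + c*v| := by
        refine le_trans (abs_add_le _ _) ?_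
        rw [abs_mul, abs_mul]
    _ ≤ |s| * (1/2) + |c| * (1/2) := by
        gcongr <;> assumption
    _ ≤ Real.sqrt 2 / 2 := by linarith

lemma abs_le_half_of_sq (x : ℝ) (h : x^2 ≤ 1/8) : |x| ≤ 1/2 := by
  nlinarith [sq_abs x, abs_nonneg x]

lemma strip_in_rect' (θ u v : ℝ) (hu : |u| ≤ 1/4) (hv : |v| ≤ 1/4) :
    |Real.cos θ * u + Real.sin θ * v| ≤ 1/2 ∧ |(-Real.sin θ) * u + Real.cos θ * v| ≤ 1/2 := by
  have hpy : Real.sin θ ^ 2 + Real.cos θ ^ 2 = 1 := Real.sin_sq_add_cos_sq θ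
  have hu2 : u^2 ≤ 1/16 := by nlinarith [abs_nonneg u, sq_abs u]
  have hv2 : v^2 ≤ 1/16 := by nlinarith [abs_nonneg v, sq_abs v]
  constructor
  · exact abs_le_half_of_sq _ (by nlinarith [sq_nonneg (Real.sin θ * u - Real.cos θ * v)])
  · exact abs_le_half_of_sq _ (by nlinarith [sq_nonneg (Real.cos θ * u + Real.sin θ * v)])

lemma sqrt_two_ge_one : (1:ℝ) ≤ Real.sqrt 2 := by
  nlinarith [Real.sq_sqrt (by norm_num : (0:ℝ) ≤ 2), Real.sqrt_nonneg 2]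

lemma main_lower (a b θ : ℝ) (p : ℝ × ℝ) (ha : Real.sqrt 2 ≤ a) (hb : Real.sqrt 2 ≤ b)
    (hp1 : p.1 ∈ Set.Icc (0:ℝ) a) (hp2 : p.2 ∈ Set.Icc (0:ℝ) b) :
    ENNReal.ofReal (1/4 + min (min p.1 (a - p.1)) (1/4) / 4 + min (min p.2 (b - p.2)) (1/4) / 4)
      ≤ volume (rect p θ 1 ∩ Set.Icc (0:ℝ) a ×ˢ Set.Icc (0:ℝ) b) := by
  obtain ⟨hp10, hp1a⟩ := hp1
  obtain ⟨hp20, hp2b⟩ := hp2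
  have h1s := sqrt_two_ge_one
  set δ₁ := min (min p.1 (a - p.1)) (1/4:ℝ) with hδ₁
  set δ₂ := min (min p.2 (b - p.2)) (1/4:ℝ) with hδ₂
  have hδ₁0 : 0 ≤ δ₁ := le_min (le_min hp10 (by linarith)) (by norm_num)
  have hδ₂0 : 0 ≤ δ₂ := le_min (le_min hp20 (by linarith)) (by norm_num)
  have hδ₁4 : δ₁ ≤ 1/4 := min_le_right _ _
  have hδ₂4 : δ₂ ≤ 1/4 := min_le_right _ _
  set e₁ : ℝ := if p.1 ≤ a/2 then 1 else -1 with he₁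
  set e₂ : ℝ := if p.2 ≤ b/2 then 1 else -1 with he₂
  have h₁ : (e₁ = 1 ∧ p.1 ≤ a/2) ∨ (e₁ = -1 ∧ a/2 ≤ p.1) := by
    rw [he₁]; split_ifs with h
    · exact Or.inl ⟨rfl, h⟩
    · exact Or.inr ⟨rfl, by linarith [lt_of_not_ge h]⟩
  have h₂ : (e₂ = 1 ∧ p.2 ≤ b/2) ∨ (e₂ = -1 ∧ b/2 ≤ p.2) := by
    rw [he₂]; split_ifs with h
    · exact Or.inl ⟨rfl, h⟩
    · exact Or.inr ⟨rfl, by linarith [lt_of_not_ge h]⟩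
  have he₁' : e₁ = 1 ∨ e₁ = -1 := h₁.imp (·.1) (·.1)
  have he₂' : e₂ = 1 ∨ e₂ = -1 := h₂.imp (·.1) (·.1)
  -- the three pieces
  set A := rect p θ 1 ∩ quadSet p e₁ e₂ with hA
  set Bx := {q : ℝ × ℝ | e₁ * (q.1 - p.1) ∈ Set.Ico (-δ₁) 0} ∩
            {q : ℝ × ℝ | e₂ * (q.2 - p.2) ∈ Set.Icc 0 (1/4)} with hBx
  set By := {q : ℝ × ℝ | e₁ * (q.1 - p.1) ∈ Set.Icc 0 (1/4)} ∩
            {q : ℝ × ℝ | e₂ * (q.2 - p.2) ∈ Set.Ico (-δ₂) 0} with hBy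
  have hTab : ∀ q : ℝ × ℝ, 0 ≤ q.1 → q.1 ≤ a → 0 ≤ q.2 → q.2 ≤ b →
      q ∈ Set.Icc (0:ℝ) a ×ˢ Set.Icc (0:ℝ) b := by
    intro q h1 h2 h3 h4
    exact ⟨⟨h1, h2⟩, ⟨h3, h4⟩⟩
  have strip_in_rect : ∀ q : ℝ × ℝ, |q.1 - p.1| ≤ 1/4 → |q.2 - p.2| ≤ 1/4 → q ∈ rect p θ 1 := by
    intro q hu hv
    have := strip_in_rect' θ (q.1 - p.1) (q.2 - p.2) hu hv
    exact ⟨this.1, by simpa using this.2⟩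
  have hδ₁p : δ₁ ≤ p.1 := le_trans (min_le_left _ _) (min_le_left _ _)
  have hδ₁a : δ₁ ≤ a - p.1 := le_trans (min_le_left _ _) (min_le_right _ _)
  have hδ₂p : δ₂ ≤ p.2 := le_trans (min_le_left _ _) (min_le_left _ _)
  have hδ₂b : δ₂ ≤ b - p.2 := le_trans (min_le_left _ _) (min_le_right _ _)
  -- A is inside the table
  have hA_tab : A ⊆ Set.Icc (0:ℝ) a ×ˢ Set.Icc (0:ℝ) b := by
    rintro q ⟨hq, hu, hv⟩
    obtain ⟨hb1, hb2⟩ := rect_coord_bound p θ q hq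
    rw [abs_le] at hb1 hb2
    have hx : 0 ≤ q.1 ∧ q.1 ≤ a := by
      rcases h₁ with ⟨he, hph⟩ | ⟨he, hph⟩ <;> rw [he] at hu <;> norm_num at hu <;>
        exact ⟨by linarith [hb1.1], by linarith [hb1.2]⟩
    have hy : 0 ≤ q.2 ∧ q.2 ≤ b := by
      rcases h₂ with ⟨he, hph⟩ | ⟨he, hph⟩ <;> rw [he] at hv <;> norm_num at hv <;>
        exact ⟨by linarith [hb2.1], by linarith [hb2.2]⟩
    exact hTab q hx.1 hx.2 hy.1 hy.2
  -- strips are inside the square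
  have hBx_rect : Bx ⊆ rect p θ 1 := by
    rintro q ⟨hx, hy⟩
    simp only [Set.mem_setOf_eq, Set.mem_Ico, Set.mem_Icc] at hx hy
    apply strip_in_rect <;> rw [abs_le]
    · rcases he₁' with he | he <;> rw [he] at hx <;> norm_num at hx <;>
        exact ⟨by linarith [hx.1, hx.2], by linarith [hx.1, hx.2]⟩
    · rcases he₂' with he | he <;> rw [he] at hy <;> norm_num at hy <;>
        exact ⟨by linarith [hy.1, hy.2], by linarith [hy.1, hy.2]⟩
  have hBy_rect : By ⊆ rect p θ 1 := by
    rintro q ⟨hx, hy⟩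
    simp only [Set.mem_setOf_eq, Set.mem_Ico, Set.mem_Icc] at hx hy
    apply strip_in_rect <;> rw [abs_le]
    · rcases he₁' with he | he <;> rw [he] at hx <;> norm_num at hx <;>
        exact ⟨by linarith [hx.1, hx.2], by linarith [hx.1, hx.2]⟩
    · rcases he₂' with he | he <;> rw [he] at hy <;> norm_num at hy <;>
        exact ⟨by linarith [hy.1, hy.2], by linarith [hy.1, hy.2]⟩
  have hBx_tab : Bx ⊆ Set.Icc (0:ℝ) a ×ˢ Set.Icc (0:ℝ) b := by
    rintro q ⟨hx, hy⟩
    simp only [Set.mem_setOf_eq, Set.mem_Ico, Set.mem_Icc] at hx hy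
    have h1 : 0 ≤ q.1 ∧ q.1 ≤ a := by
      rcases h₁ with ⟨he, hph⟩ | ⟨he, hph⟩ <;> rw [he] at hx <;> norm_num at hx <;>
        exact ⟨by linarith [hx.1, hx.2], by linarith [hx.1, hx.2]⟩
    have h2 : 0 ≤ q.2 ∧ q.2 ≤ b := by
      rcases h₂ with ⟨he, hph⟩ | ⟨he, hph⟩ <;> rw [he] at hy <;> norm_num at hy <;>
        exact ⟨by linarith [hy.1, hy.2, h1s, hb], by linarith [hy.1, hy.2, h1s, hb]⟩
    exact hTab q h1.1 h1.2 h2.1 h2.2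
  have hBy_tab : By ⊆ Set.Icc (0:ℝ) a ×ˢ Set.Icc (0:ℝ) b := by
    rintro q ⟨hx, hy⟩
    simp only [Set.mem_setOf_eq, Set.mem_Ico, Set.mem_Icc] at hx hy
    have h1 : 0 ≤ q.1 ∧ q.1 ≤ a := by
      rcases h₁ with ⟨he, hph⟩ | ⟨he, hph⟩ <;> rw [he] at hx <;> norm_num at hx <;>
        exact ⟨by linarith [hx.1, hx.2, h1s, ha], by linarith [hx.1, hx.2, h1s, ha]⟩
    have h2 : 0 ≤ q.2 ∧ q.2 ≤ b := by
      rcases h₂ with ⟨he, hph⟩ | ⟨he, hph⟩ <;> rw [he] at hy <;> norm_num at hy <;>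
        exact ⟨by linarith [hy.1, hy.2], by linarith [hy.1, hy.2]⟩
    exact hTab q h1.1 h1.2 h2.1 h2.2
  -- measurability
  have mA : MeasurableSet A := (measurableSet_rect p θ 1).inter (measurableSet_quadSet p e₁ e₂)
  have mBx : MeasurableSet Bx := by
    apply MeasurableSet.inter
    · exact (measurableSet_Ico).preimage (by fun_prop)
    · exact (measurableSet_Icc).preimage (by fun_prop)
  have mBy : MeasurableSet By := by
    apply MeasurableSet.inter
    · exact (measurableSet_Icc).preimage (by fun_prop)
    · exact (measurableSet_Ico).preimage (by fun_prop)
  -- disjointness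
  have dABx : Disjoint A Bx := by
    rw [Set.disjoint_left]
    rintro q ⟨_, hu, _⟩ ⟨hx, _⟩
    simp only [Set.mem_setOf_eq, Set.mem_Ico] at hx
    linarith [hx.2]
  have dABy : Disjoint A By := by
    rw [Set.disjoint_left]
    rintro q ⟨_, _, hv⟩ ⟨_, hy⟩
    simp only [Set.mem_setOf_eq, Set.mem_Ico] at hy
    linarith [hy.2]
  have dBxBy : Disjoint Bx By := by
    rw [Set.disjoint_left]
    rintro q ⟨hx, _⟩ ⟨hx', _⟩
    simp only [Set.mem_setOf_eq, Set.mem_Ico, Set.mem_Icc] at hx hx'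
    linarith [hx.2, hx'.1]
  -- volumes of strips
  have volBx : volume Bx = ENNReal.ofReal (δ₁ / 4) := by
    have hprod : Bx = {x : ℝ | e₁ * (x - p.1) ∈ Set.Ico (-δ₁) 0} ×ˢ
        {y : ℝ | e₂ * (y - p.2) ∈ Set.Icc 0 (1/4)} := by
      ext q; exact Iff.rfl
    rw [hprod, Measure.volume_eq_prod, Measure.prod_prod,
      vol_lineIco e₁ p.1 (-δ₁) 0 he₁' (by linarith),
      vol_lineIcc e₂ p.2 0 (1/4) he₂' (by norm_num),
      ← ENNReal.ofReal_mul (by linarith)]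
    congr 1; ring
  have volBy : volume By = ENNReal.ofReal (δ₂ / 4) := by
    have hprod : By = {x : ℝ | e₁ * (x - p.1) ∈ Set.Icc 0 (1/4)} ×ˢ
        {y : ℝ | e₂ * (y - p.2) ∈ Set.Ico (-δ₂) 0} := by
      ext q; exact Iff.rfl
    rw [hprod, Measure.volume_eq_prod, Measure.prod_prod,
      vol_lineIcc e₁ p.1 0 (1/4) he₁' (by norm_num),
      vol_lineIco e₂ p.2 (-δ₂) 0 he₂' (by linarith),
      ← ENNReal.ofReal_mul (by norm_num)]
    congr 1; ring
  -- assembling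
  have hsub : A ∪ (Bx ∪ By) ⊆ rect p θ 1 ∩ Set.Icc (0:ℝ) a ×ˢ Set.Icc (0:ℝ) b := by
    rintro q (hq | hq | hq)
    · exact ⟨hq.1, hA_tab hq⟩
    · exact ⟨hBx_rect hq, hBx_tab hq⟩
    · exact ⟨hBy_rect hq, hBy_tab hq⟩
  have hvol_union : volume (A ∪ (Bx ∪ By)) = volume A + (volume Bx + volume By) := by
    rw [measure_union (by exact Set.disjoint_union_right.mpr ⟨dABx, dABy⟩) (mBx.union mBy),
      measure_union dBxBy mBy]
  have o4 : ENNReal.ofReal (1/4 : ℝ) = 1/4 := by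
    rw [ENNReal.ofReal_div_of_pos (by norm_num)]
    norm_num
  calc ENNReal.ofReal (1/4 + δ₁/4 + δ₂/4)
      = ENNReal.ofReal (1/4) + (ENNReal.ofReal (δ₁/4) + ENNReal.ofReal (δ₂/4)) := by
        rw [← ENNReal.ofReal_add (by linarith) (by linarith),
          ← ENNReal.ofReal_add (by norm_num) (by linarith), add_assoc]
    _ ≤ volume A + (volume Bx + volume By) := by
        rw [volBx, volBy, o4]
        exact add_le_add (quad_vol p θ e₁ e₂ he₁' he₂') le_rfl
    _ = volume (A ∪ (Bx ∪ By)) := hvol_union.symm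
    _ ≤ volume (rect p θ 1 ∩ Set.Icc (0:ℝ) a ×ˢ Set.Icc (0:ℝ) b) := measure_mono hsub

/-- For a `1 × L` laptop (`L ≥ 1`) on a table `T = [0,a] × [0,b]` with `a, b ≥ √2`, every
stable placement (center `p ∈ T`) has footprint area at least `1/4`, and equality is only
possible when `p` is a corner of the table. -/
theorem footprint_at_least_quarter (a b L : ℝ)
    (ha : Real.sqrt 2 ≤ a) (hb : Real.sqrt 2 ≤ b) (hL : 1 ≤ L)
    (p : ℝ × ℝ) (hp : p ∈ Set.Icc (0 : ℝ) a ×ˢ Set.Icc (0 : ℝ) b) (θ : ℝ) :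
    volume (rect p θ L ∩ Set.Icc (0 : ℝ) a ×ˢ Set.Icc (0 : ℝ) b) ≥ 1 / 4 ∧
      (volume (rect p θ L ∩ Set.Icc (0 : ℝ) a ×ˢ Set.Icc (0 : ℝ) b) = 1 / 4 →
        (p.1 = 0 ∨ p.1 = a) ∧ (p.2 = 0 ∨ p.2 = b)) := by

  obtain ⟨hp1, hp2⟩ := hp
  obtain ⟨hp10, hp1a⟩ := hp1
  obtain ⟨hp20, hp2b⟩ := hp2
  set δ₁ := min (min p.1 (a - p.1)) (1/4:ℝ) with hδ₁
  set δ₂ := min (min p.2 (b - p.2)) (1/4:ℝ) with hδ₂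
  have hδ₁0 : 0 ≤ δ₁ := le_min (le_min hp10 (by linarith)) (by norm_num)
  have hδ₂0 : 0 ≤ δ₂ := le_min (le_min hp20 (by linarith)) (by norm_num)
  have hsub : rect p θ 1 ⊆ rect p θ L := by
    rintro q ⟨h1, h2⟩
    exact ⟨h1, le_trans h2 (by linarith)⟩
  have hlow : ENNReal.ofReal (1/4 + δ₁/4 + δ₂/4)
      ≤ volume (rect p θ L ∩ Set.Icc (0:ℝ) a ×ˢ Set.Icc (0:ℝ) b) :=
    le_trans (main_lower a b θ p ha hb ⟨hp10, hp1a⟩ ⟨hp20, hp2b⟩)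
      (measure_mono (Set.inter_subset_inter_left _ hsub))
  have o4 : ENNReal.ofReal (1/4 : ℝ) = 1/4 := by
    rw [ENNReal.ofReal_div_of_pos (by norm_num)]
    norm_num
  constructor
  · refine le_trans ?_ hlow
    rw [← o4]
    exact ENNReal.ofReal_le_ofReal (by linarith)
  · intro heq
    rw [heq, ← o4] at hlow
    have hr : 1/4 + δ₁/4 + δ₂/4 ≤ (1/4 : ℝ) :=
      (ENNReal.ofReal_le_ofReal_iff (by norm_num)).mp hlow
    have hδ₁z : δ₁ = 0 := by linarith
    have hδ₂z : δ₂ = 0 := by linarith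
    constructor
    · have hmin : min p.1 (a - p.1) ≤ 0 := by
        rcases min_le_iff.mp (le_of_eq hδ₁z) with h | h
        · exact h
        · norm_num at h
      rcases min_le_iff.mp hmin with h | h
      · exact Or.inl (le_antisymm h hp10)
      · exact Or.inr (by linarith)
    · have hmin : min p.2 (b - p.2) ≤ 0 := by
        rcases min_le_iff.mp (le_of_eq hδ₂z) with h | h
        · exact h
        · norm_num at h
      rcases min_le_iff.mp hmin with h | h
      · exact Or.inl (le_antisymm h hp20)
      · exact Or.inr (by linarith)
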